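/- The simple graph G on vertex set {1,2,3,4,5,6,7} with edge set {{1,2},{1,4},{1,5},{1,6},{1,7},{2,3},{2,6},{3,4},{4,6},{5,6},{5,7},{6,7}} (graph number 956 in the Atlas of Graphs) has minimum rank 3 over the real numbers. -/

import Mathlib

/-- Edge list of graph number 956 in the Atlas of Graphs (vertices 1..7). -/
def atlas956Edges : List (ℕ × ℕ) := [(1,2),(1,4),(1,5),(1,6),(1,7),(2,3),(2,6),(3,4),(4,6),(5,6),(5,7),(6,7)]

namespace Atlas956Aux

open Matrix

noncomputable def B : Matrix (Fin 3) (Fin 7) ℝ :=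
  !![1,1,1,0,0,1,0; (-1),0,1,1,0,(-1),0; 1,0,0,0,1,1,1]

noncomputable def A0 : Matrix (Fin 7) (Fin 7) ℝ := Bᵀ * B

/-- selection matrices -/
noncomputable def P : Matrix (Fin 3) (Fin 7) ℝ :=
  Matrix.of fun i k => if k = (![1,6,2] : Fin 3 → Fin 7) i then 1 else 0

noncomputable def Q : Matrix (Fin 7) (Fin 3) ℝ :=
  Matrix.of fun k j => if k = (![5,4,3] : Fin 3 → Fin 7) j then 1 else 0

lemma lower (A : Matrix (Fin 7) (Fin 7) ℝ)
    (h : ∀ i j : Fin 7, i ≠ j →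
      (A i j ≠ 0 ↔
        ((i.val + 1, j.val + 1) ∈ atlas956Edges ∨
         (j.val + 1, i.val + 1) ∈ atlas956Edges))) : 3 ≤ A.rank := by
  have hzero : ∀ i j : Fin 7, i ≠ j →
      ¬((i.val + 1, j.val + 1) ∈ atlas956Edges ∨
        (j.val + 1, i.val + 1) ∈ atlas956Edges) → A i j = 0 := by
    intro i j hij hm
    by_contra hn
    exact hm ((h i j hij).mp hn)
  have hx : A 1 5 ≠ 0 := (h 1 5 (by decide)).mpr (by decide)
  have hz : A 6 4 ≠ 0 := (h 6 4 (by decide)).mpr (by decide)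
  have hw : A 2 3 ≠ 0 := (h 2 3 (by decide)).mpr (by decide)
  have h14 : A 1 4 = 0 := hzero 1 4 (by decide) (by decide)
  have h13 : A 1 3 = 0 := hzero 1 3 (by decide) (by decide)
  have h63 : A 6 3 = 0 := hzero 6 3 (by decide) (by decide)
  have h25 : A 2 5 = 0 := hzero 2 5 (by decide) (by decide)
  have h24 : A 2 4 = 0 := hzero 2 4 (by decide) (by decide)
  have hC : P * A * Q =
      !![A 1 5, A 1 4, A 1 3; A 6 5, A 6 4, A 6 3; A 2 5, A 2 4, A 2 3] := by
    ext i j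
    fin_cases i <;> fin_cases j <;>
      simp [P, Q, Matrix.mul_apply, Fin.sum_univ_seven]
  have hdet : (P * A * Q).det ≠ 0 := by
    rw [hC, Matrix.det_fin_three]
    simp [h14, h13, h63, h25, h24]
    exact ⟨⟨hx, hz⟩, hw⟩
  have hrank3 : (P * A * Q).rank = 3 := by
    have := Matrix.rank_of_isUnit (P * A * Q)
      ((Matrix.isUnit_iff_isUnit_det _).mpr (isUnit_iff_ne_zero.mpr hdet))
    simpa using this
  calc 3 = (P * A * Q).rank := hrank3.symm
    _ ≤ (P * A).rank := Matrix.rank_mul_le_left _ _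
    _ ≤ A.rank := Matrix.rank_mul_le_right _ _

lemma A0_pattern : ∀ i j : Fin 7, i ≠ j →
    (A0 i j ≠ 0 ↔
      ((i.val + 1, j.val + 1) ∈ atlas956Edges ∨
       (j.val + 1, i.val + 1) ∈ atlas956Edges)) := by
  intro i j hij
  have hA0 : ∀ i j : Fin 7, A0 i j = B 0 i * B 0 j + B 1 i * B 1 j + B 2 i * B 2 j := by
    intro i j
    simp [A0, Matrix.mul_apply, Fin.sum_univ_three]
  fin_cases i <;> fin_cases j <;>
    first
      | exact absurd rfl hij
      | norm_num [hA0, B, atlas956Edges, Matrix.cons_val_zero, Matrix.cons_val_one,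
          Matrix.head_cons, Matrix.cons_val', Matrix.cons_val_fin_one, Matrix.empty_val',
          Matrix.head_fin_const, Matrix.vecHead, Matrix.vecTail, Matrix.cons_val, Matrix.cons_val_two]

lemma A0_symm : A0.IsSymm := by
  show (Bᵀ * B)ᵀ = Bᵀ * B
  rw [Matrix.transpose_mul, Matrix.transpose_transpose]

end Atlas956Aux

/-- Graph number 956 in the Atlas of Graphs has minimum rank 3 over the reals:
3 is the least element of the set of ranks of real symmetric 7×7 matrices whose
off-diagonal zero/nonzero pattern matches the edges of the graph. -/
theorem atlas956_minRank_eq_three :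
    IsLeast {r : ℕ | ∃ A : Matrix (Fin 7) (Fin 7) ℝ, A.IsSymm ∧
        (∀ i j : Fin 7, i ≠ j →
          (A i j ≠ 0 ↔
            ((i.val + 1, j.val + 1) ∈ atlas956Edges ∨
             (j.val + 1, i.val + 1) ∈ atlas956Edges))) ∧
        A.rank = r} 3 := by
  constructor
  · refine ⟨Atlas956Aux.A0, ?_, Atlas956Aux.A0_pattern, ?_⟩
    · exact Atlas956Aux.A0_symm
    · have hle : Atlas956Aux.A0.rank ≤ 3 := by
        calc Atlas956Aux.A0.rank ≤ Atlas956Aux.B.rank :=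
              Matrix.rank_mul_le_right _ _
          _ ≤ 3 := by simpa using Matrix.rank_le_card_height Atlas956Aux.B
      exact le_antisymm hle (Atlas956Aux.lower _ Atlas956Aux.A0_pattern)
  · rintro r ⟨A, -, hpat, rfl⟩
    exact Atlas956Aux.lower A hpat
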